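/- In the single-species case, the 3×3 symmetric matrix H with entries H₁₁ = (r/ρ)ξ, H₂₂ = ρβ/T, H₃₃ = ρc_v(β−η)/T², H₁₃ = H₃₁ = −(c_v/T)(ξ−β), other entries zero, where ξ = f'−rf'', β = f', η = c_v f'', has determinant (ρ r c_v (f')²/T³)·(f' − c_p f''), where c_p = c_v + r. -/
import Mathlib

open Matrix

theorem stmt_11 (r ρ T cv f' f'' : ℝ)
    (hr : 0 < r) (hρ : 0 < ρ) (hT : 0 < T) (hcv : 0 < cv)
    (cp : ℝ) (hcp : cp = cv + r)
    (ξ β η : ℝ) (hξ : ξ = f' - r * f'') (hβ : β = f') (hη : η = cv * f'') :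
    (!![(r / ρ) * ξ, 0, -(cv / T) * (ξ - β);
        0, ρ * β / T, 0;
        -(cv / T) * (ξ - β), 0, ρ * cv * (β - η) / T ^ 2]).det
      = (ρ * r * cv * f' ^ 2 / T ^ 3) * (f' - cp * f'') := by
  subst hcp hξ hβ hη
  simp [Matrix.det_fin_three]
  field_simp
  ring
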